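/- Let H be a self-adjoint operator bounded below on ℋ = L²(X, dm) with spectral measure μ_ψ associated to ψ. If for some ψ ≥ 0 the liminf as t → ∞ of ⟨ψ, e^{-tH}ψ⟩/⟨ψ, e^{-2tH}ψ⟩^{1/2} is strictly positive, then E_ψ := inf supp μ_ψ is an eigenvalue of H, and P_{E_ψ}ψ ≠ 0 where P_{E_ψ} is the spectral projection onto {E_ψ}. -/

import Mathlib

open MeasureTheory Filter Topology
open scoped RealInnerProductSpace

private lemma aux_integrable {ν : Measure ℝ} [IsFiniteMeasure ν] {c : ℝ}
    (hae : ∀ᵐ x ∂ν, c ≤ x) {t : ℝ} (ht : 0 ≤ t) :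
    Integrable (fun x => Real.exp (-t * x)) ν := by
  refine Integrable.mono' (integrable_const (Real.exp (-t * c)))
    ((Real.continuous_exp.comp (continuous_const.mul continuous_id)).aestronglyMeasurable) ?_
  filter_upwards [hae] with x hx
  rw [Real.norm_eq_abs, abs_of_pos (Real.exp_pos _)]
  exact Real.exp_le_exp.2 (by nlinarith)

/-- Core estimate: for each `δ > 0`, the liminf of the Laplace-transform ratio is at most
`√(ν [c, c+δ))`. -/
private lemma liminf_ratio_le {ν : Measure ℝ} [IsFiniteMeasure ν] {c : ℝ}
    (hIio : ν (Set.Iio c) = 0)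
    (hpos : ∀ η : ℝ, 0 < η → 0 < ν (Set.Ico c (c + η)))
    {δ : ℝ} (hδ : 0 < δ) :
    liminf (fun t : ℝ => (∫ x, Real.exp (-t * x) ∂ν) /
        Real.sqrt (∫ x, Real.exp (-(2 * t) * x) ∂ν)) atTop
      ≤ Real.sqrt ((ν (Set.Ico c (c + δ))).toReal) := by
  have hae : ∀ᵐ x ∂ν, c ≤ x := by
    rw [ae_iff]
    convert hIio using 2
    ext x; simp [not_le]
  set F : ℝ → ℝ := fun t => ∫ x, Real.exp (-t * x) ∂ν with hF
  have hint : ∀ t : ℝ, 0 ≤ t → Integrable (fun x => Real.exp (-t * x)) ν :=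
    fun t ht => aux_integrable hae ht
  have hF0 : ∀ t, 0 ≤ F t := fun t => integral_nonneg fun x => (Real.exp_pos _).le
  set p : ℝ := (ν (Set.Ico c (c + δ))).toReal with hp
  set q : ℝ := (ν (Set.Ico c (c + δ / 2))).toReal with hq
  have hq0 : 0 < q :=
    ENNReal.toReal_pos (hpos _ (half_pos hδ)).ne' (measure_ne_top _ _)
  set m : ℝ := (ν Set.univ).toReal with hm
  have hm0 : 0 ≤ m := ENNReal.toReal_nonneg
  -- lower bound for the denominator
  have hlow : ∀ t : ℝ, 0 ≤ t →
      Real.exp (-t * (c + δ / 2)) * Real.sqrt q ≤ Real.sqrt (F (2 * t)) := by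
    intro t ht
    have h1 : Real.exp (-(2 * t) * (c + δ / 2)) * q ≤ F (2 * t) := by
      have h2 : Real.exp (-(2 * t) * (c + δ / 2)) * q
          ≤ ∫ x in Set.Ico c (c + δ / 2), Real.exp (-(2 * t) * x) ∂ν := by
        refine le_trans (le_of_eq (by rw [smul_eq_mul, mul_comm, hq, Measure.real_def]))
          (setIntegral_ge_of_const_le (c := Real.exp (-(2 * t) * (c + δ / 2))) measurableSet_Ico (measure_ne_top _ _) ?_
          ((hint (2 * t) (by linarith)).integrableOn))
        intro x hx
        exact Real.exp_le_exp.2 (by nlinarith [hx.1, hx.2])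
      refine h2.trans (setIntegral_le_integral (hint (2 * t) (by linarith)) ?_)
      exact Filter.Eventually.of_forall fun x => (Real.exp_pos _).le
    have h3 : Real.exp (-t * (c + δ / 2)) * Real.sqrt q
        = Real.sqrt (Real.exp (-(2 * t) * (c + δ / 2)) * q) := by
      rw [Real.sqrt_mul (Real.exp_pos _).le]
      congr 1
      rw [show (-(2 * t) * (c + δ / 2)) = -t * (c + δ / 2) + -t * (c + δ / 2) by ring,
        Real.exp_add, Real.sqrt_mul_self (Real.exp_pos _).le]
    rw [h3]
    exact Real.sqrt_le_sqrt h1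
  -- Cauchy-Schwarz for the near part
  have hnear : ∀ t : ℝ, 0 ≤ t →
      (∫ x in Set.Iio (c + δ), Real.exp (-t * x) ∂ν)
        ≤ Real.sqrt p * Real.sqrt (F (2 * t)) := by
    intro t ht
    set s : Set ℝ := Set.Iio (c + δ) with hs
    have hνs : ν s = ν (Set.Ico c (c + δ)) := by
      refine le_antisymm ?_ (measure_mono ?_)
      · calc ν s ≤ ν (Set.Iio c ∪ Set.Ico c (c + δ)) := by
              rw [Set.Iio_union_Ico_eq_Iio (by linarith)]
          _ ≤ ν (Set.Iio c) + ν (Set.Ico c (c + δ)) := measure_union_le _ _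
          _ = ν (Set.Ico c (c + δ)) := by rw [hIio, zero_add]
      · exact fun x hx => lt_of_lt_of_le hx.2 le_rfl
    have hconj : Real.HolderConjugate 2 2 := Real.HolderConjugate.two_two
    have hg : MemLp (fun x => Real.exp (-t * x)) (ENNReal.ofReal 2) (ν.restrict s) := by
      refine MemLp.of_bound
        ((Real.continuous_exp.comp (continuous_const.mul continuous_id)).aestronglyMeasurable)
        (Real.exp (-t * c)) ?_
      filter_upwards [ae_restrict_of_ae hae] with x hx
      rw [Real.norm_eq_abs, abs_of_pos (Real.exp_pos _)]
      exact Real.exp_le_exp.2 (by nlinarith)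
    have hCS := integral_mul_le_Lp_mul_Lq_of_nonneg (μ := ν.restrict s) hconj
      (f := fun _ => (1 : ℝ)) (g := fun x => Real.exp (-t * x))
      (Filter.Eventually.of_forall fun _ => zero_le_one)
      (Filter.Eventually.of_forall fun x => (Real.exp_pos _).le)
      (memLp_const 1) hg
    simp only [one_mul] at hCS
    have h1 : (∫ _ in s, (1 : ℝ) ^ (2 : ℝ) ∂ν) = (ν s).toReal := by
      simp [Real.one_rpow, Measure.real_def]
    have h2 : (∫ x in s, Real.exp (-t * x) ^ (2 : ℝ) ∂ν) = ∫ x in s, Real.exp (-(2 * t) * x) ∂ν := by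
      refine integral_congr_ae (Filter.Eventually.of_forall fun x => ?_)
      show Real.exp (-t * x) ^ (2 : ℝ) = Real.exp (-(2 * t) * x)
      rw [show (2 : ℝ) = ((2 : ℕ) : ℝ) by norm_num, Real.rpow_natCast, sq, ← Real.exp_add]
      ring_nf
    rw [h1, h2, hνs] at hCS
    have h3 : (∫ x in s, Real.exp (-(2 * t) * x) ∂ν) ≤ F (2 * t) :=
      setIntegral_le_integral (hint (2 * t) (by linarith))
        (Filter.Eventually.of_forall fun x => (Real.exp_pos _).le)
    calc (∫ x in s, Real.exp (-t * x) ∂ν)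
        ≤ (ν (Set.Ico c (c + δ))).toReal ^ ((1 : ℝ) / 2)
            * (∫ x in s, Real.exp (-(2 * t) * x) ∂ν) ^ ((1 : ℝ) / 2) := hCS
      _ ≤ Real.sqrt p * Real.sqrt (F (2 * t)) := by
          rw [← Real.sqrt_eq_rpow, ← Real.sqrt_eq_rpow]
          exact mul_le_mul_of_nonneg_left (Real.sqrt_le_sqrt h3) (Real.sqrt_nonneg _)
  -- far part
  have hfar : ∀ t : ℝ, 0 ≤ t →
      (∫ x in Set.Ici (c + δ), Real.exp (-t * x) ∂ν) ≤ Real.exp (-t * (c + δ)) * m := by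
    intro t ht
    have h := norm_setIntegral_le_of_norm_le_const (μ := ν) (s := Set.Ici (c + δ))
      (f := fun x => Real.exp (-t * x)) (C := Real.exp (-t * (c + δ)))
      (measure_lt_top _ _) (fun x hx => by
        rw [Real.norm_eq_abs, abs_of_pos (Real.exp_pos _)]
        exact Real.exp_le_exp.2 (by nlinarith [Set.mem_Ici.mp hx]))
    rw [Real.norm_eq_abs] at h
    calc (∫ x in Set.Ici (c + δ), Real.exp (-t * x) ∂ν)
        ≤ |∫ x in Set.Ici (c + δ), Real.exp (-t * x) ∂ν| := le_abs_self _
      _ ≤ Real.exp (-t * (c + δ)) * (ν (Set.Ici (c + δ))).toReal := h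
      _ ≤ Real.exp (-t * (c + δ)) * m := by
          refine mul_le_mul_of_nonneg_left ?_ (Real.exp_pos _).le
          exact ENNReal.toReal_mono (measure_ne_top _ _) (measure_mono (Set.subset_univ _))
  -- combine: eventual bound
  set g : ℝ → ℝ := fun t => Real.sqrt p + Real.exp (-(δ / 2) * t) * (m / Real.sqrt q) with hg
  have hcomb : ∀ t : ℝ, 0 ≤ t → F t / Real.sqrt (F (2 * t)) ≤ g t := by
    intro t ht
    have hd0 : 0 < Real.exp (-t * (c + δ / 2)) * Real.sqrt q :=
      mul_pos (Real.exp_pos _) (Real.sqrt_pos.2 hq0)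
    have hD0 : 0 < Real.sqrt (F (2 * t)) := lt_of_lt_of_le hd0 (hlow t ht)
    have hsplit : F t = (∫ x in Set.Iio (c + δ), Real.exp (-t * x) ∂ν)
        + (∫ x in Set.Ici (c + δ), Real.exp (-t * x) ∂ν) := by
      rw [show F t = ∫ x, Real.exp (-t * x) ∂ν from rfl,
        ← integral_add_compl (measurableSet_Iio (a := c + δ)) (hint t ht), Set.compl_Iio]
    have hFle : F t ≤ Real.sqrt p * Real.sqrt (F (2 * t)) + Real.exp (-t * (c + δ)) * m := by
      rw [hsplit]; exact add_le_add (hnear t ht) (hfar t ht)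
    have step1 : F t / Real.sqrt (F (2 * t))
        ≤ Real.sqrt p + Real.exp (-t * (c + δ)) * m / Real.sqrt (F (2 * t)) := by
      rw [div_le_iff₀ hD0, add_mul, div_mul_cancel₀ _ hD0.ne']
      exact hFle
    refine step1.trans ?_
    rw [hg]
    refine add_le_add le_rfl ?_
    have step2 : Real.exp (-t * (c + δ)) * m / Real.sqrt (F (2 * t))
        ≤ Real.exp (-t * (c + δ)) * m / (Real.exp (-t * (c + δ / 2)) * Real.sqrt q) :=
      div_le_div_of_nonneg_left (mul_nonneg (Real.exp_pos _).le hm0) hd0 (hlow t ht)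
    refine step2.trans (le_of_eq ?_)
    have hrw : Real.exp (-t * (c + δ)) * m / (Real.exp (-t * (c + δ / 2)) * Real.sqrt q)
        = (Real.exp (-t * (c + δ)) / Real.exp (-t * (c + δ / 2))) * (m / Real.sqrt q) := by
      ring
    rw [hrw, ← Real.exp_sub, show -t * (c + δ) - -t * (c + δ / 2) = -(δ / 2) * t by ring]
  -- pass to the liminf
  have hgt : Tendsto g atTop (𝓝 (Real.sqrt p)) := by
    have h2 : Tendsto (fun t : ℝ => (δ / 2) * t) atTop atTop :=
      Filter.Tendsto.const_mul_atTop (half_pos hδ) tendsto_id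
    have h1 : Tendsto (fun t : ℝ => Real.exp (-(δ / 2) * t)) atTop (𝓝 0) :=
      (Real.tendsto_exp_neg_atTop_nhds_zero.comp h2).congr fun t => by
        simp [Function.comp, neg_mul]
    have h3 := (h1.mul_const (m / Real.sqrt q)).const_add (Real.sqrt p)
    rw [hg]
    simpa using h3
  have hev : ∀ᶠ t in atTop,
      F t / Real.sqrt (F (2 * t)) ≤ g t := by
    filter_upwards [eventually_ge_atTop (0 : ℝ)] with t ht using hcomb t ht
  have hbddF : IsBoundedUnder (· ≥ ·) atTop (fun t => F t / Real.sqrt (F (2 * t))) := by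
    refine ⟨0, ?_⟩
    rw [eventually_map]
    filter_upwards with t
    exact div_nonneg (hF0 t) (Real.sqrt_nonneg _)
  have hcobg : IsCoboundedUnder (· ≥ ·) atTop g := by
    refine isCoboundedUnder_ge_of_eventually_le atTop (x := Real.sqrt p + m / Real.sqrt q) ?_
    filter_upwards [eventually_ge_atTop (0 : ℝ)] with t ht
    rw [hg]
    have h1 : Real.exp (-(δ / 2) * t) ≤ 1 := by
      rw [Real.exp_le_one_iff]
      nlinarith
    have h2 : 0 ≤ m / Real.sqrt q := div_nonneg hm0 (Real.sqrt_nonneg _)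
    nlinarith
  calc liminf (fun t : ℝ => F t / Real.sqrt (F (2 * t))) atTop
      ≤ liminf g atTop := liminf_le_liminf hev hbddF hcobg
    _ = Real.sqrt p := hgt.liminf_eq

/-- Let `H` be self-adjoint and bounded below on a Hilbert space,
with semigroup `S t = e^{-tH}` and spectral measure `ν = μ_ψ` of `ψ`, so that
`⟪ψ, S t ψ⟫ = ∫ e^{-tx} dν` and the support of `ν` is bounded below with infimum
`Eψ`.  Let `P` be the spectral projection onto `{Eψ}`, so `‖Pψ‖² = ν({Eψ})` and
`S t (P φ) = e^{-t Eψ} P φ`.  If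
`liminf_{t→∞} ⟪ψ, S t ψ⟫/⟪ψ, S(2t)ψ⟫^{1/2} > 0`, then `ν({Eψ}) > 0`, hence
`P ψ ≠ 0` and `Eψ` is an eigenvalue of `H` (there is a nonzero `φ` with
`S t φ = e^{-t Eψ} φ`). -/
theorem spectral_infimum_is_eigenvalue
    {E : Type*} [NormedAddCommGroup E] [InnerProductSpace ℝ E] [CompleteSpace E]
    (S : ℝ → (E →L[ℝ] E)) (ψ : E) (hψ : ψ ≠ 0)
    (ν : Measure ℝ) [IsFiniteMeasure ν] (hνreg : ν.Regular)
    (hpair : ∀ t : ℝ, 0 ≤ t → ⟪ψ, S t ψ⟫ = ∫ x, Real.exp (-t * x) ∂ν)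
    (hbdd : ∃ b : ℝ, ν (Set.Iio b) = 0)
    (Eψ : ℝ)
    (hEψ : Eψ = sInf {x : ℝ | ∀ ε : ℝ, 0 < ε → 0 < ν (Set.Ioo (x - ε) (x + ε))})
    (Pproj : E →L[ℝ] E)
    (hPnorm : ‖Pproj ψ‖ ^ 2 = (ν {Eψ}).toReal)
    (hPeig : ∀ φ : E, ∀ t : ℝ, 0 ≤ t → S t (Pproj φ) = Real.exp (-t * Eψ) • Pproj φ)
    (hliminf : 0 < liminf (fun t : ℝ =>
      ⟪ψ, S t ψ⟫ / ⟪ψ, S (2 * t) ψ⟫ ^ ((1 : ℝ) / 2)) atTop) :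
    0 < ν {Eψ} ∧ Pproj ψ ≠ 0 ∧
      ∃ φ : E, φ ≠ 0 ∧ ∀ t : ℝ, 0 ≤ t → S t φ = Real.exp (-t * Eψ) • φ := by
  by_cases hν0 : ν = 0
  · exfalso
    have hzero : (fun t : ℝ => ⟪ψ, S t ψ⟫ / ⟪ψ, S (2 * t) ψ⟫ ^ ((1 : ℝ) / 2))
        =ᶠ[atTop] (fun _ => (0 : ℝ)) := by
      filter_upwards [eventually_ge_atTop (0 : ℝ)] with t ht
      rw [hpair t ht, hpair (2 * t) (by linarith), hν0]
      simp
    have hl0 : liminf (fun t : ℝ =>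
        ⟪ψ, S t ψ⟫ / ⟪ψ, S (2 * t) ψ⟫ ^ ((1 : ℝ) / 2)) atTop = 0 := by
      rw [liminf_congr hzero]
      exact liminf_const 0
    rw [hl0] at hliminf
    exact lt_irrefl 0 hliminf
  set A := {x : ℝ | ∀ ε : ℝ, 0 < ε → 0 < ν (Set.Ioo (x - ε) (x + ε))} with hA
  obtain ⟨b, hb⟩ := hbdd
  have hAbdd : BddBelow A := by
    refine ⟨b, fun x hx => ?_⟩
    by_contra h
    push_neg at h
    have h1 : 0 < ν (Set.Ioo (x - (b - x)) (x + (b - x))) := hx (b - x) (by linarith)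
    have h2 : ν (Set.Ioo (x - (b - x)) (x + (b - x))) = 0 := by
      refine measure_mono_null ?_ hb
      intro z hz
      simp only [Set.mem_Ioo] at hz
      simp only [Set.mem_Iio]
      linarith [hz.2]
    rw [h2] at h1
    exact lt_irrefl 0 h1
  have hAclosed : IsClosed A := by
    rw [← isOpen_compl_iff, Metric.isOpen_iff]
    intro x hx
    simp only [hA, Set.mem_compl_iff, Set.mem_setOf_eq, not_forall] at hx
    obtain ⟨ε, hε, h0⟩ := hx
    rw [not_lt, nonpos_iff_eq_zero] at h0
    refine ⟨ε / 2, half_pos hε, fun y hy => ?_⟩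
    rw [Metric.mem_ball, Real.dist_eq, abs_sub_lt_iff] at hy
    simp only [Set.mem_compl_iff, hA, Set.mem_setOf_eq, not_forall]
    refine ⟨ε / 2, half_pos hε, ?_⟩
    rw [not_lt, nonpos_iff_eq_zero]
    refine measure_mono_null ?_ h0
    intro z hz
    simp only [Set.mem_Ioo] at hz ⊢
    constructor <;> linarith [hz.1, hz.2, hy.1, hy.2]
  have hν0' : ν Set.univ ≠ 0 := fun h => hν0 (Measure.measure_univ_eq_zero.1 h)
  have hAne : A.Nonempty := by
    by_contra h
    rw [Set.not_nonempty_iff_eq_empty] at h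
    refine hν0' (measure_null_of_locally_null Set.univ fun x _ => ?_)
    have hx : x ∉ A := by rw [h]; exact Set.notMem_empty x
    simp only [hA, Set.mem_setOf_eq, not_forall] at hx
    obtain ⟨ε, hε, h0⟩ := hx
    rw [not_lt, nonpos_iff_eq_zero] at h0
    exact ⟨Set.Ioo (x - ε) (x + ε),
      mem_nhdsWithin_of_mem_nhds (Ioo_mem_nhds (by linarith) (by linarith)), h0⟩
  have hcA : Eψ ∈ A := by
    rw [hEψ]
    exact hAclosed.csInf_mem hAne hAbdd
  have hIio : ν (Set.Iio Eψ) = 0 := by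
    refine measure_null_of_locally_null _ fun x hx => ?_
    have hxA : x ∉ A := by
      intro hxA
      have := csInf_le hAbdd hxA
      rw [← hEψ] at this
      exact absurd this (not_le.2 hx)
    simp only [hA, Set.mem_setOf_eq, not_forall] at hxA
    obtain ⟨ε, hε, h0⟩ := hxA
    rw [not_lt, nonpos_iff_eq_zero] at h0
    exact ⟨Set.Ioo (x - ε) (x + ε),
      mem_nhdsWithin_of_mem_nhds (Ioo_mem_nhds (by linarith) (by linarith)), h0⟩
  have hpos : ∀ η : ℝ, 0 < η → 0 < ν (Set.Ico Eψ (Eψ + η)) := by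
    intro η hη
    have h1 : 0 < ν (Set.Ioo (Eψ - η) (Eψ + η)) := hcA η hη
    by_contra h
    rw [not_lt, nonpos_iff_eq_zero] at h
    have h2 : ν (Set.Ioo (Eψ - η) (Eψ + η)) = 0 := by
      refine measure_mono_null (fun z hz => ?_) (measure_union_null hIio h)
      simp only [Set.mem_Ioo] at hz
      rcases lt_or_ge z Eψ with h' | h'
      · exact Or.inl h'
      · exact Or.inr ⟨h', hz.2⟩
    rw [h2] at h1
    exact lt_irrefl 0 h1
  have hratio : liminf (fun t : ℝ =>
      ⟪ψ, S t ψ⟫ / ⟪ψ, S (2 * t) ψ⟫ ^ ((1 : ℝ) / 2)) atTop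
      = liminf (fun t : ℝ => (∫ x, Real.exp (-t * x) ∂ν) /
          Real.sqrt (∫ x, Real.exp (-(2 * t) * x) ∂ν)) atTop := by
    refine liminf_congr ?_
    filter_upwards [eventually_ge_atTop (0 : ℝ)] with t ht
    rw [hpair t ht, hpair (2 * t) (by linarith), Real.sqrt_eq_rpow]
  rw [hratio] at hliminf
  have hkey : ∀ n : ℕ, liminf (fun t : ℝ => (∫ x, Real.exp (-t * x) ∂ν) /
      Real.sqrt (∫ x, Real.exp (-(2 * t) * x) ∂ν)) atTop
      ≤ Real.sqrt ((ν (Set.Ico Eψ (Eψ + 1 / ((n : ℝ) + 1)))).toReal) :=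
    fun n => liminf_ratio_le hIio hpos (by positivity)
  have hmono : Antitone (fun n : ℕ => Set.Ico Eψ (Eψ + 1 / ((n : ℝ) + 1))) := by
    intro n m hnm
    refine Set.Ico_subset_Ico_right (add_le_add le_rfl ?_)
    refine one_div_le_one_div_of_le (by positivity) ?_
    have : (n : ℝ) ≤ (m : ℝ) := Nat.cast_le.2 hnm
    linarith
  have hiInter : (⋂ n : ℕ, Set.Ico Eψ (Eψ + 1 / ((n : ℝ) + 1))) = {Eψ} := by
    ext x
    simp only [Set.mem_iInter, Set.mem_Ico, Set.mem_singleton_iff]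
    constructor
    · intro h
      refine le_antisymm ?_ (h 0).1
      by_contra hgt
      push_neg at hgt
      obtain ⟨n, hn⟩ := exists_nat_one_div_lt (sub_pos.2 hgt)
      have := (h n).2
      linarith
    · rintro rfl
      refine fun n => ⟨le_refl _, ?_⟩
      have : (0:ℝ) < 1 / ((n : ℝ) + 1) := by positivity
      linarith
  have htend : Tendsto (fun n : ℕ => ν (Set.Ico Eψ (Eψ + 1 / ((n : ℝ) + 1)))) atTop
      (𝓝 (ν {Eψ})) := by
    have h := tendsto_measure_iInter_atTop (μ := ν)
      (fun n => measurableSet_Ico.nullMeasurableSet) hmono ⟨0, measure_ne_top _ _⟩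
    rw [hiInter] at h
    exact h
  have htend2 : Tendsto (fun n : ℕ =>
      Real.sqrt ((ν (Set.Ico Eψ (Eψ + 1 / ((n : ℝ) + 1)))).toReal)) atTop
      (𝓝 (Real.sqrt ((ν {Eψ}).toReal))) :=
    (Real.continuous_sqrt.continuousAt.tendsto).comp
      ((ENNReal.tendsto_toReal (measure_ne_top _ _)).comp htend)
  have hle : liminf (fun t : ℝ => (∫ x, Real.exp (-t * x) ∂ν) /
      Real.sqrt (∫ x, Real.exp (-(2 * t) * x) ∂ν)) atTop
      ≤ Real.sqrt ((ν {Eψ}).toReal) := ge_of_tendsto' htend2 hkey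
  have h0 : 0 < Real.sqrt ((ν {Eψ}).toReal) := lt_of_lt_of_le hliminf hle
  have htR : 0 < (ν {Eψ}).toReal := Real.sqrt_pos.1 h0
  have hνpos : 0 < ν {Eψ} := (ENNReal.toReal_pos_iff.1 htR).1
  have hPne : Pproj ψ ≠ 0 := by
    intro hP
    rw [hP] at hPnorm
    simp only [norm_zero] at hPnorm
    rw [← hPnorm] at htR
    norm_num at htR
  exact ⟨hνpos, hPne, ⟨Pproj ψ, hPne, fun t ht => hPeig ψ t ht⟩⟩
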